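/- For m ≥ 3, the lifted code RM₂(1,m)(2|2²) has weight enumerator 1 + 3(2^{m+1}−2) z^{2^{m−1}} + 4(2^m−1)(2^m−2) z^{3·2^{m−2}} + 3(2^{m+1}−1) z^{2^m}. -/

import Mathlib

open Finset

/-- Hamming weight of a vector. -/
noncomputable def wt {ι R : Type*} [Fintype ι] [Zero R] (c : ι → R) : ℕ :=
  Set.ncard {j | c j ≠ 0}

/-- The lifted code `C(q|q^ℓ)`: the `E`-span of (the image in `E^n` of) a code `C ⊆ F^n`. -/
noncomputable def liftCode (F : Type*) {ι : Type*} (E : Type*) [Field F] [Field E] [Algebra F E]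
    (C : Submodule F (ι → F)) : Submodule E (ι → E) :=
  Submodule.span E ((fun c : ι → F => fun j => algebraMap F E (c j)) '' (C : Set (ι → F)))

/-- `A_i(C)`: the number of codewords of Hamming weight `i`. -/
noncomputable def numWt {ι R : Type*} [Fintype ι] [Semiring R] (C : Submodule R (ι → R)) (i : ℕ) : ℕ :=
  Set.ncard {c : ι → R | c ∈ C ∧ wt c = i}

/-- The set of supports of weight-`i` codewords of `C` (without repetition). -/
def codeSupports {ι R : Type*} [Fintype ι] [Semiring R] (C : Submodule R (ι → R)) (i : ℕ) :
    Set (Set ι) :=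
  {s | ∃ c, c ∈ C ∧ wt c = i ∧ s = {j | c j ≠ 0}}

/-- `C` has minimum Hamming distance `d`. -/
def IsMinDist {ι R : Type*} [Fintype ι] [Semiring R] (C : Submodule R (ι → R)) (d : ℕ) : Prop :=
  (∃ c, c ∈ C ∧ c ≠ 0 ∧ wt c = d) ∧ ∀ c, c ∈ C → c ≠ 0 → d ≤ wt c

/-- The dual code under the standard bilinear form. -/
def dualCode {ι R : Type*} [Fintype ι] [CommRing R] (C : Submodule R (ι → R)) :
    Submodule R (ι → R) where
  carrier := {x | ∀ c ∈ C, ∑ j, x j * c j = 0}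
  add_mem' := by
    intro a b ha hb c hc
    simp only [Set.mem_setOf_eq] at *
    simp [Pi.add_apply, add_mul, Finset.sum_add_distrib, ha c hc, hb c hc]
  zero_mem' := by intro c hc; simp
  smul_mem' := by
    intro a x hx c hc
    simp only [Set.mem_setOf_eq] at *
    simp [Pi.smul_apply, smul_eq_mul, mul_assoc, ← Finset.mul_sum, hx c hc]

/-- Evaluation of multivariate polynomials over `GF(2)` as a linear map. -/
noncomputable def evalLM (m : ℕ) :
    MvPolynomial (Fin m) (ZMod 2) →ₗ[ZMod 2] ((Fin m → ZMod 2) → ZMod 2) where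
  toFun := fun p x => MvPolynomial.eval x p
  map_add' := by intro p q; funext x; simp
  map_smul' := by intro a p; funext x; simp

/-- The binary Reed-Muller code `RM₂(r,m)`: evaluations of polynomials of total degree `≤ r`. -/
noncomputable def RM (r m : ℕ) : Submodule (ZMod 2) ((Fin m → ZMod 2) → ZMod 2) :=
  Submodule.map (evalLM m) (MvPolynomial.restrictTotalDegree (Fin m) (ZMod 2) r)


/- ### Auxiliary material ### -/

open Function in
private lemma fiber_card {M N : Type*} [AddCommGroup M] [AddCommGroup N] [Fintype M] [Fintype N]
    [DecidableEq N] (f : M →+ N) (hf : Surjective f) (n : N) :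
    Fintype.card {x : M // f x = n} * Fintype.card N = Fintype.card M := by
  have key : ∀ a b : N, Fintype.card {x : M // f x = a} = Fintype.card {x : M // f x = b} := by
    intro a b
    obtain ⟨xa, hxa⟩ := hf a
    obtain ⟨xb, hxb⟩ := hf b
    apply Fintype.card_congr
    refine ⟨fun x => ⟨x.1 - xa + xb, by simp [map_add, map_sub, x.2, hxa, hxb]⟩,
            fun x => ⟨x.1 - xb + xa, by simp [map_add, map_sub, x.2, hxa, hxb]⟩, ?_, ?_⟩ <;>
      (intro x; ext; simp)
  have h2 := Fintype.card_congr (Equiv.sigmaFiberEquiv f)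
  rw [Fintype.card_sigma] at h2
  rw [← h2, Finset.sum_congr rfl (fun b _ => key b n)]
  simp [Finset.sum_const, mul_comm]

private lemma zmod2_cases' (a : ZMod 2) : a = 0 ∨ a = 1 := by revert a; decide

private lemma zmod2_eq_one {a : ZMod 2} (h : a ≠ 0) : a = 1 := by
  rcases zmod2_cases' a with rfl | rfl
  · exact absurd rfl h
  · rfl

private lemma zmod2_succ_of_ne {a b : ZMod 2} (h : a ≠ b) : b = a + 1 := by
  rcases zmod2_cases' a with rfl | rfl <;> rcases zmod2_cases' b with rfl | rfl
  · exact absurd rfl h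
  · decide
  · decide
  · exact absurd rfl h

private lemma zmod2_self_ne_succ (b : ZMod 2) : b ≠ b + 1 := by
  rcases zmod2_cases' b with rfl | rfl <;> decide

/-- the linear functional x ↦ ∑ u i * x i -/
private noncomputable def Lf {m : ℕ} (u : Fin m → ZMod 2) :
    (Fin m → ZMod 2) →ₗ[ZMod 2] ZMod 2 where
  toFun x := ∑ i, u i * x i
  map_add' x y := by simp [mul_add, Finset.sum_add_distrib]
  map_smul' c x := by simp [Finset.mul_sum]; ring_nf; simp [mul_assoc, mul_comm, mul_left_comm]

private lemma Lf_single {m : ℕ} (u : Fin m → ZMod 2) (i : Fin m) :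
    Lf u (Pi.single i 1) = u i := by
  simp only [Lf, LinearMap.coe_mk, AddHom.coe_mk]
  rw [Finset.sum_eq_single i]
  · simp
  · intro j _ hj; simp [Pi.single_eq_of_ne hj]
  · simp

private lemma Lf_zero {m : ℕ} (x : Fin m → ZMod 2) : Lf (0 : Fin m → ZMod 2) x = 0 := by
  simp [Lf]

private lemma card_domain {m : ℕ} : Fintype.card (Fin m → ZMod 2) = 2 ^ m := by
  simp [Fintype.card_fun]

private lemma pi_ne_zero_iff {m : ℕ} {u : Fin m → ZMod 2} : u ≠ 0 ↔ ∃ i, u i = 1 := by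
  constructor
  · intro hu
    by_contra h; push_neg at h
    exact hu (funext fun i => by rcases zmod2_cases' (u i) with h0 | h1
                                 · exact h0
                                 · exact absurd h1 (h i))
  · rintro ⟨i, hi⟩ h0; rw [h0] at hi; simp at hi

private lemma card_single {m : ℕ} {u : Fin m → ZMod 2} (hu : u ≠ 0) (b : ZMod 2) :
    Fintype.card {x : Fin m → ZMod 2 // Lf u x = b} = 2 ^ (m - 1) := by
  obtain ⟨i, hi⟩ := pi_ne_zero_iff.mp hu
  have hsurj : Function.Surjective (Lf u).toAddMonoidHom := by
    intro c
    rcases zmod2_cases' c with h | h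
    · exact ⟨0, by simp [h]⟩
    · exact ⟨Pi.single i 1, by simpa [Lf_single, hi] using h.symm⟩
  have := fiber_card (Lf u).toAddMonoidHom hsurj b
  simp only [LinearMap.toAddMonoidHom_coe, card_domain, ZMod.card] at this
  have hm : 1 ≤ m := Nat.pos_of_ne_zero (by rintro rfl; exact i.elim0)
  have h2m : 2 ^ m = 2 ^ (m - 1) * 2 := by
    rw [← pow_succ, Nat.sub_add_cancel hm]
  have h3 : Fintype.card {x // Lf u x = b} * 2 = 2 ^ (m - 1) * 2 := by rw [← h2m]; convert this; exact Fintype.card_congr (Equiv.refl _)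
  omega

private lemma card_pair {m : ℕ} {u v : Fin m → ZMod 2} (hu : u ≠ 0) (hv : v ≠ 0) (huv : u ≠ v)
    (b₀ b₁ : ZMod 2) :
    Fintype.card {x : Fin m → ZMod 2 // Lf u x = b₀ ∧ Lf v x = b₁} = 2 ^ (m - 2) := by
  obtain ⟨k, hk⟩ := pi_ne_zero_iff.mp hu
  obtain ⟨j, hj⟩ := pi_ne_zero_iff.mp hv
  obtain ⟨i, hi⟩ : ∃ i, u i ≠ v i := by
    by_contra h; push_neg at h; exact huv (funext h)
  set T : (Fin m → ZMod 2) →ₗ[ZMod 2] ZMod 2 × ZMod 2 := (Lf u).prod (Lf v) with hT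
  have hTsingle : ∀ r, T (Pi.single r 1) = (u r, v r) := fun r => by
    simp [hT, LinearMap.prod_apply, Lf_single]
  have key : (∃ x, T x = (1,0)) ∧ (∃ x, T x = (0,1)) := by
    rcases zmod2_cases' (u i) with hui | hui <;> rcases zmod2_cases' (v i) with hvi | hvi
    · exact absurd (hui.trans hvi.symm) hi
    · refine ⟨?_, ⟨Pi.single i 1, by rw [hTsingle]; rw [hui, hvi]⟩⟩
      rcases zmod2_cases' (v k) with hvk | hvk
      · exact ⟨Pi.single k 1, by rw [hTsingle, hk, hvk]⟩
      · exact ⟨Pi.single k 1 + Pi.single i 1, by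
          rw [map_add, hTsingle, hTsingle, hk, hvk, hui, hvi]; decide⟩
    · refine ⟨⟨Pi.single i 1, by rw [hTsingle, hui, hvi]⟩, ?_⟩
      rcases zmod2_cases' (u j) with huj | huj
      · exact ⟨Pi.single j 1, by rw [hTsingle, hj, huj]⟩
      · exact ⟨Pi.single j 1 + Pi.single i 1, by
          rw [map_add, hTsingle, hTsingle, hj, huj, hui, hvi]; decide⟩
    · exact absurd (hui.trans hvi.symm) hi
  obtain ⟨⟨x₁, hx₁⟩, ⟨x₂, hx₂⟩⟩ := key
  have hsurj : Function.Surjective T.toAddMonoidHom := by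
    intro c
    refine ⟨c.1 • x₁ + c.2 • x₂, ?_⟩
    simp only [LinearMap.toAddMonoidHom_coe, map_add, map_smul, hx₁, hx₂]
    rcases zmod2_cases' c.1 with h1 | h1 <;> rcases zmod2_cases' c.2 with h2 | h2 <;>
      simp [h1, h2, Prod.ext_iff]
  have hfc := fiber_card T.toAddMonoidHom hsurj (b₀, b₁)
  have hcongr : Fintype.card {x : Fin m → ZMod 2 // Lf u x = b₀ ∧ Lf v x = b₁}
      = Fintype.card {x : Fin m → ZMod 2 // T.toAddMonoidHom x = (b₀, b₁)} := by
    apply Fintype.card_congr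
    exact Equiv.subtypeEquivRight (fun x => by simp [hT, LinearMap.prod_apply, Prod.ext_iff])
  rw [hcongr]
  have hm : 2 ≤ m := by
    by_contra h
    push_neg at h
    interval_cases m
    · exact i.elim0
    · apply hi
      rw [Subsingleton.elim i k, hk, Subsingleton.elim k j, hj]
  simp only [card_domain, Fintype.card_prod, ZMod.card] at hfc
  have h2m : 2 ^ m = 2 ^ (m - 2) * (2 * 2) := by
    rw [show (2 * 2 : ℕ) = 2 ^ 2 from rfl, ← pow_add]
    congr 1; omega
  omega

private lemma finsupp_deg_le_one {m : ℕ} {d : Fin m →₀ ℕ} (h : (d.sum fun _ n => n) ≤ 1) :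
    d = 0 ∨ ∃ i, d = Finsupp.single i 1 := by
  by_cases hd : d = 0
  · exact Or.inl hd
  · right
    obtain ⟨i, hi⟩ := Finsupp.ne_iff.mp hd
    simp only [Finsupp.coe_zero, Pi.zero_apply] at hi
    have hisup : i ∈ d.support := Finsupp.mem_support_iff.mpr hi
    have hsum : (d.sum fun _ n => n) = ∑ j ∈ d.support, d j := rfl
    have hle : d i ≤ ∑ j ∈ d.support, d j :=
      Finset.single_le_sum (fun j _ => Nat.zero_le _) hisup
    have hdi : d i = 1 := by omega
    refine ⟨i, ?_⟩
    ext j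
    by_cases hji : j = i
    · simp [hji, hdi]
    · simp only [Finsupp.single_apply]
      rw [if_neg (fun hh => hji hh.symm)]
      by_contra hj
      have hjsup : j ∈ d.support := Finsupp.mem_support_iff.mpr hj
      have : d i + d j ≤ ∑ k ∈ d.support, d k := by
        rw [← Finset.sum_pair (fun hh => hji hh.symm : i ≠ j)]
        exact Finset.sum_le_sum_of_subset (by
          intro k hk
          simp only [Finset.mem_insert, Finset.mem_singleton] at hk
          rcases hk with rfl | rfl <;> assumption)
      omega

private lemma mem_RM_one {m : ℕ} (c : (Fin m → ZMod 2) → ZMod 2) :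
    c ∈ RM 1 m ↔ ∃ (a : Fin m → ZMod 2) (b : ZMod 2),
      c = fun x => (∑ i, a i * x i) + b := by
  constructor
  · rintro ⟨p, hp, rfl⟩
    rw [SetLike.mem_coe, MvPolynomial.mem_restrictTotalDegree] at hp
    refine ⟨fun i => MvPolynomial.coeff (Finsupp.single i 1) p, MvPolynomial.coeff 0 p, ?_⟩
    have hpeq : p = (∑ i, MvPolynomial.C (MvPolynomial.coeff (Finsupp.single i 1) p) *
        MvPolynomial.X i) + MvPolynomial.C (MvPolynomial.coeff 0 p) := by
      apply MvPolynomial.ext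
      intro d
      rw [MvPolynomial.coeff_add, MvPolynomial.coeff_C, MvPolynomial.coeff_sum]
      simp only [MvPolynomial.coeff_C_mul, MvPolynomial.coeff_X']
      by_cases hd0 : d = 0
      · subst hd0
        rw [Finset.sum_eq_zero, if_pos rfl, zero_add]
        intro i _
        rw [if_neg (by
              intro hh
              have := Finsupp.single_eq_zero.mp hh
              exact one_ne_zero this), mul_zero]
      · by_cases hds : ∃ i, d = Finsupp.single i 1
        · obtain ⟨i, rfl⟩ := hds
          rw [if_neg (fun hh => hd0 hh.symm), add_zero,
            Finset.sum_eq_single i]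
          · rw [if_pos rfl, mul_one]
          · intro j _ hj
            rw [if_neg, mul_zero]
            intro hh
            exact hj (by
              have := (Finsupp.single_left_inj (one_ne_zero)).mp hh
              exact this)
          · intro h; exact absurd (Finset.mem_univ i) h
        · have hdeg : 1 < ∑ k ∈ d.support, d k := by
            by_contra hh
            push_neg at hh
            rcases finsupp_deg_le_one (d := d) (by simpa [Finsupp.sum] using hh) with h0 | hs
            · exact hd0 h0
            · exact hds hs
          rw [MvPolynomial.coeff_eq_zero_of_totalDegree_lt (lt_of_le_of_lt hp hdeg),
            if_neg (fun hh => hd0 hh.symm), add_zero, Finset.sum_eq_zero]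
          intro i _
          rw [if_neg, mul_zero]
          intro hh
          exact hds ⟨i, hh.symm⟩
    funext x
    conv_lhs => rw [hpeq]
    simp [evalLM]
  · rintro ⟨a, b, rfl⟩
    refine ⟨(∑ i, MvPolynomial.C (a i) * MvPolynomial.X i) + MvPolynomial.C b, ?_, ?_⟩
    · rw [SetLike.mem_coe, MvPolynomial.mem_restrictTotalDegree]
      refine le_trans (MvPolynomial.totalDegree_add _ _) (max_le ?_ (by
        simp [MvPolynomial.totalDegree_C]))
      refine le_trans (MvPolynomial.totalDegree_finset_sum _ _) ?_
      apply Finset.sup_le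
      intro i _
      refine le_trans (MvPolynomial.totalDegree_mul _ _) ?_
      simp [MvPolynomial.totalDegree_C, MvPolynomial.totalDegree_X]
    · funext x
      simp [evalLM]

section Esec
variable {E : Type*} [Field E] [Algebra (ZMod 2) E]

private lemma phi_inj : Function.Injective (algebraMap (ZMod 2) E) := by
  haveI : Fact (Nat.Prime 2) := ⟨Nat.prime_two⟩
  exact (algebraMap (ZMod 2) E).injective

private lemma exists_omega [Fintype E] (hE : Fintype.card E = 2 ^ 2) :
    ∃ ω : E, ω ≠ 0 ∧ ω ≠ 1 := by
  classical
  by_contra h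
  push_neg at h
  have hsub : (Finset.univ : Finset E) ⊆ {0, 1} := by
    intro e _
    rcases eq_or_ne e 0 with rfl | he
    · simp
    · simp [h e he]
  have := Finset.card_le_card hsub
  have h2 : ({0, 1} : Finset E).card ≤ 2 := Finset.card_insert_le _ _ |>.trans (by simp)
  rw [Finset.card_univ, hE] at this
  omega

/-- decomposition map (u,v) ↦ φ u + φ v * ω -/
private noncomputable def psi (ω : E) (u v : ZMod 2) : E :=
  algebraMap (ZMod 2) E u + algebraMap (ZMod 2) E v * ω

private lemma psi_inj {ω : E} (hω0 : ω ≠ 0) (hω1 : ω ≠ 1) :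
    Function.Injective (fun q : ZMod 2 × ZMod 2 => psi ω q.1 q.2) := by
  rintro ⟨u, v⟩ ⟨u', v'⟩ h
  simp only [psi] at h
  have key : ∀ s t : ZMod 2, algebraMap (ZMod 2) E s = algebraMap (ZMod 2) E t * ω →
      s = 0 ∧ t = 0 := by
    intro s t hst
    rcases zmod2_cases' t with rfl | rfl
    · refine ⟨phi_inj (E := E) (by simpa using hst), rfl⟩
    · exfalso
      rcases zmod2_cases' s with rfl | rfl
      · simp only [map_zero, map_one, one_mul] at hst
        exact hω0 hst.symm
      · simp only [map_one, one_mul] at hst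
        exact hω1 hst.symm
  have h2 : algebraMap (ZMod 2) E (u - u') = algebraMap (ZMod 2) E (v' - v) * ω := by
    rw [map_sub, map_sub]
    linear_combination h
  obtain ⟨h3, h4⟩ := key _ _ h2
  have h5 : u = u' := sub_eq_zero.mp h3
  have h6 : v' = v := sub_eq_zero.mp h4
  exact Prod.ext h5 h6.symm

private lemma psi_surj [Fintype E] {ω : E} (hE : Fintype.card E = 2 ^ 2) (hω0 : ω ≠ 0)
    (hω1 : ω ≠ 1) : Function.Surjective (fun q : ZMod 2 × ZMod 2 => psi ω q.1 q.2) := by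
  have hcard : Fintype.card (ZMod 2 × ZMod 2) = Fintype.card E := by
    simp [hE]
  exact ((Fintype.bijective_iff_injective_and_card _).mpr ⟨psi_inj hω0 hω1, hcard⟩).2

private lemma psi_eq_zero_iff {ω : E} (hω0 : ω ≠ 0) (hω1 : ω ≠ 1) (u v : ZMod 2) :
    psi ω u v = 0 ↔ u = 0 ∧ v = 0 := by
  constructor
  · intro h
    have h0 : psi ω (0 : ZMod 2) 0 = 0 := by simp [psi]
    have := psi_inj hω0 hω1 (a₁ := (u, v)) (a₂ := (0, 0)) (by simpa [h0] using h)
    exact ⟨congrArg Prod.fst this, congrArg Prod.snd this⟩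
  · rintro ⟨rfl, rfl⟩
    simp [psi]

end Esec

/-- parameter space -/
private abbrev Param (m : ℕ) := (Fin m → ZMod 2) × (Fin m → ZMod 2) × ZMod 2 × ZMod 2

section Esec2
variable {E : Type*} [Field E] [Algebra (ZMod 2) E] {m : ℕ}

/-- the codeword attached to parameters -/
private noncomputable def cw (ω : E) (p : Param m) : (Fin m → ZMod 2) → E :=
  fun x => psi ω (Lf p.1 x + p.2.2.1) (Lf p.2.1 x + p.2.2.2)

private lemma cw_affine (ω : E) (p : Param m) :
    cw ω p = fun x => (∑ i, psi ω (p.1 i) (p.2.1 i) * algebraMap (ZMod 2) E (x i))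
      + psi ω p.2.2.1 p.2.2.2 := by
  obtain ⟨u, v, b₀, b₁⟩ := p
  funext x
  have hswap : ∑ i, algebraMap (ZMod 2) E (v i) * algebraMap (ZMod 2) E (x i) * ω
      = ∑ i, algebraMap (ZMod 2) E (v i) * ω * algebraMap (ZMod 2) E (x i) :=
    Finset.sum_congr rfl (fun i _ => by ring)
  simp only [cw, psi, Lf, LinearMap.coe_mk, AddHom.coe_mk, map_add, map_sum, map_mul,
    add_mul, Finset.sum_add_distrib, Finset.sum_mul]
  rw [hswap]
  ring

private lemma mem_lift_iff_affine (c : (Fin m → ZMod 2) → E) :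
    c ∈ liftCode (ZMod 2) E (RM 1 m) ↔
      ∃ (a : Fin m → E) (b : E),
        c = fun x => (∑ i, a i * algebraMap (ZMod 2) E (x i)) + b := by
  constructor
  · intro hc
    let SE : Submodule E ((Fin m → ZMod 2) → E) :=
      { carrier := {c | ∃ (a : Fin m → E) (b : E),
          c = fun x => (∑ i, a i * algebraMap (ZMod 2) E (x i)) + b}
        add_mem' := by
          rintro c₁ c₂ ⟨a₁, b₁, rfl⟩ ⟨a₂, b₂, rfl⟩
          refine ⟨a₁ + a₂, b₁ + b₂, ?_⟩
          funext x
          simp [add_mul, Finset.sum_add_distrib]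
          ring
        zero_mem' := ⟨0, 0, by funext x; simp⟩
        smul_mem' := by
          rintro e c ⟨a, b, rfl⟩
          refine ⟨e • a, e • b, ?_⟩
          funext x
          simp [Finset.mul_sum, mul_assoc, mul_add] }
    have hle : liftCode (ZMod 2) E (RM 1 m) ≤ SE := by
      rw [liftCode, Submodule.span_le]
      rintro _ ⟨c₀, hc₀, rfl⟩
      obtain ⟨a, b, rfl⟩ := (mem_RM_one c₀).mp hc₀
      refine ⟨fun i => algebraMap (ZMod 2) E (a i), algebraMap (ZMod 2) E b, ?_⟩
      funext x
      simp [map_add, map_sum, map_mul]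
    exact hle hc
  · rintro ⟨a, b, rfl⟩
    have hgen : ∀ c₀ : (Fin m → ZMod 2) → ZMod 2, c₀ ∈ RM 1 m →
        (fun x => algebraMap (ZMod 2) E (c₀ x)) ∈ liftCode (ZMod 2) E (RM 1 m) := by
      intro c₀ h₀
      exact Submodule.subset_span ⟨c₀, h₀, rfl⟩
    have hX : ∀ i : Fin m, (fun x : Fin m → ZMod 2 => algebraMap (ZMod 2) E (x i)) ∈
        liftCode (ZMod 2) E (RM 1 m) := by
      intro i
      have : (fun x : Fin m → ZMod 2 => x i) ∈ RM 1 m := by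
        rw [mem_RM_one]
        refine ⟨Pi.single i 1, 0, ?_⟩
        funext x
        rw [Finset.sum_eq_single i]
        · simp
        · intro j _ hj; simp [Pi.single_eq_of_ne hj]
        · simp
      exact hgen _ this
    have h1 : (fun _ : Fin m → ZMod 2 => (1 : E)) ∈ liftCode (ZMod 2) E (RM 1 m) := by
      have : (fun _ : Fin m → ZMod 2 => (1 : ZMod 2)) ∈ RM 1 m := by
        rw [mem_RM_one]; exact ⟨0, 1, by funext x; simp⟩
      simpa using hgen _ this
    have heq : (fun x => (∑ i, a i * algebraMap (ZMod 2) E (x i)) + b)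
        = (∑ i, a i • (fun x : Fin m → ZMod 2 => algebraMap (ZMod 2) E (x i)))
          + b • (fun _ : Fin m → ZMod 2 => (1 : E)) := by
      funext x
      simp [Finset.sum_apply]
    rw [heq]
    exact Submodule.add_mem _
      (Submodule.sum_mem _ (fun i _ => Submodule.smul_mem _ _ (hX i)))
      (Submodule.smul_mem _ _ h1)

private lemma mem_lift_iff_cw [Fintype E] (hE : Fintype.card E = 2 ^ 2) {ω : E} (hω0 : ω ≠ 0)
    (hω1 : ω ≠ 1) (c : (Fin m → ZMod 2) → E) :
    c ∈ liftCode (ZMod 2) E (RM 1 m) ↔ ∃ p : Param m, c = cw ω p := by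
  have hsurj := psi_surj hE hω0 hω1
  rw [mem_lift_iff_affine]
  constructor
  · rintro ⟨a, b, rfl⟩
    choose f hf using fun i => hsurj (a i)
    obtain ⟨q, hq⟩ := hsurj b
    refine ⟨⟨fun i => (f i).1, fun i => (f i).2, q.1, q.2⟩, ?_⟩
    rw [cw_affine]
    funext x
    simp only []
    rw [show psi ω q.1 q.2 = b from hq]
    congr 1
    apply Finset.sum_congr rfl
    intro i _
    rw [show psi ω (f i).1 (f i).2 = a i from hf i]
  · rintro ⟨p, rfl⟩
    rw [cw_affine]
    exact ⟨fun i => psi ω (p.1 i) (p.2.1 i), psi ω p.2.2.1 p.2.2.2, rfl⟩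

end Esec2

section W
variable {E : Type*} [Field E] [Algebra (ZMod 2) E] {m : ℕ} {ω : E}

private lemma wt_eq_card {ι : Type*} [Fintype ι] (c : ι → E)
    [DecidablePred (fun j => c j ≠ 0)] :
    wt c = Fintype.card {j // c j ≠ 0} := by
  rw [wt, ← Nat.card_coe_set_eq, Nat.card_eq_fintype_card]
  exact Fintype.card_congr (Equiv.subtypeEquivRight (fun j => Iff.rfl))

private lemma cw_zero_iff (hω0 : ω ≠ 0) (hω1 : ω ≠ 1) (p : Param m) (x : Fin m → ZMod 2) :
    cw ω p x = 0 ↔ (Lf p.1 x = p.2.2.1 ∧ Lf p.2.1 x = p.2.2.2) := by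
  rw [cw, psi_eq_zero_iff hω0 hω1]
  have h2 : ∀ a b : ZMod 2, a + b = 0 ↔ a = b := by decide
  rw [h2, h2]

private lemma wt_cw (hω0 : ω ≠ 0) (hω1 : ω ≠ 1) (p : Param m) :
    wt (cw ω p) = 2 ^ m -
      Fintype.card {x : Fin m → ZMod 2 // Lf p.1 x = p.2.2.1 ∧ Lf p.2.1 x = p.2.2.2} := by
  classical
  rw [wt_eq_card]
  have h1 : Fintype.card {x // ¬ (cw ω p x = 0)}
      = Fintype.card (Fin m → ZMod 2) - Fintype.card {x // cw ω p x = 0} :=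
    Fintype.card_subtype_compl _
  have h2 : Fintype.card {x // cw ω p x ≠ 0} = Fintype.card {x // ¬ (cw ω p x = 0)} := rfl
  rw [h2, h1, card_domain]
  congr 1
  exact Fintype.card_congr (Equiv.subtypeEquivRight (fun x => cw_zero_iff hω0 hω1 p x))

private lemma N_00 (b₀ b₁ : ZMod 2) :
    Fintype.card {x : Fin m → ZMod 2 // Lf (0 : Fin m → ZMod 2) x = b₀ ∧
      Lf (0 : Fin m → ZMod 2) x = b₁} = if b₀ = 0 ∧ b₁ = 0 then 2 ^ m else 0 := by
  classical
  split_ifs with h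
  · obtain ⟨rfl, rfl⟩ := h
    rw [← card_domain (m := m)]
    apply Fintype.card_congr
    exact Equiv.subtypeUnivEquiv (fun x => ⟨Lf_zero x, Lf_zero x⟩)
  · rw [Fintype.card_eq_zero_iff]
    refine ⟨fun ⟨x, hx1, hx2⟩ => h ⟨?_, ?_⟩⟩
    · rw [← hx1, Lf_zero]
    · rw [← hx2, Lf_zero]

private lemma N_u0 {u : Fin m → ZMod 2} (hu : u ≠ 0) (b₀ b₁ : ZMod 2) :
    Fintype.card {x : Fin m → ZMod 2 // Lf u x = b₀ ∧ Lf (0 : Fin m → ZMod 2) x = b₁}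
      = if b₁ = 0 then 2 ^ (m - 1) else 0 := by
  classical
  split_ifs with h
  · subst h
    rw [← card_single hu b₀]
    exact Fintype.card_congr (Equiv.subtypeEquivRight (fun x => by simp [Lf_zero]))
  · rw [Fintype.card_eq_zero_iff]
    exact ⟨fun ⟨x, _, hx2⟩ => h (by rw [← hx2, Lf_zero])⟩

private lemma N_0v {v : Fin m → ZMod 2} (hv : v ≠ 0) (b₀ b₁ : ZMod 2) :
    Fintype.card {x : Fin m → ZMod 2 // Lf (0 : Fin m → ZMod 2) x = b₀ ∧ Lf v x = b₁}
      = if b₀ = 0 then 2 ^ (m - 1) else 0 := by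
  classical
  split_ifs with h
  · subst h
    rw [← card_single hv b₁]
    exact Fintype.card_congr (Equiv.subtypeEquivRight (fun x => by simp [Lf_zero]))
  · rw [Fintype.card_eq_zero_iff]
    exact ⟨fun ⟨x, hx1, _⟩ => h (by rw [← hx1, Lf_zero])⟩

private lemma N_uu {u : Fin m → ZMod 2} (hu : u ≠ 0) (b₀ b₁ : ZMod 2) :
    Fintype.card {x : Fin m → ZMod 2 // Lf u x = b₀ ∧ Lf u x = b₁}
      = if b₀ = b₁ then 2 ^ (m - 1) else 0 := by
  classical
  split_ifs with h
  · subst h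
    rw [← card_single hu b₀]
    exact Fintype.card_congr (Equiv.subtypeEquivRight (fun x => by tauto))
  · rw [Fintype.card_eq_zero_iff]
    exact ⟨fun ⟨x, hx1, hx2⟩ => h (hx1 ▸ hx2 ▸ rfl)⟩

end W

private def Qh {m : ℕ} (p : Param m) : Prop :=
  (p.1 ≠ 0 ∧ p.2.1 = 0 ∧ p.2.2.2 = 0) ∨ (p.1 = 0 ∧ p.2.1 ≠ 0 ∧ p.2.2.1 = 0) ∨
    (p.1 = p.2.1 ∧ p.1 ≠ 0 ∧ p.2.2.1 = p.2.2.2)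
private def Qt {m : ℕ} (p : Param m) : Prop := p.1 ≠ 0 ∧ p.2.1 ≠ 0 ∧ p.1 ≠ p.2.1
private def Qf {m : ℕ} (p : Param m) : Prop :=
  (p.1 = 0 ∧ p.2.1 = 0 ∧ ¬(p.2.2.1 = 0 ∧ p.2.2.2 = 0)) ∨ (p.1 ≠ 0 ∧ p.2.1 = 0 ∧ p.2.2.2 ≠ 0) ∨
    (p.1 = 0 ∧ p.2.1 ≠ 0 ∧ p.2.2.1 ≠ 0) ∨ (p.1 = p.2.1 ∧ p.1 ≠ 0 ∧ p.2.2.1 ≠ p.2.2.2)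

private instance {m : ℕ} : DecidablePred (Qh (m := m)) := fun p => by unfold Qh; infer_instance
private instance {m : ℕ} : DecidablePred (Qt (m := m)) := fun p => by unfold Qt; infer_instance
private instance {m : ℕ} : DecidablePred (Qf (m := m)) := fun p => by unfold Qf; infer_instance

private lemma Q_exhaustive {m : ℕ} (p : Param m) : p = 0 ∨ Qh p ∨ Qt p ∨ Qf p := by
  obtain ⟨u, v, b₀, b₁⟩ := p
  simp only [Qh, Qt, Qf, Prod.mk_eq_zero]
  by_cases hu : u = 0 <;> by_cases hv : v = 0
  · by_cases hb : b₀ = 0 ∧ b₁ = 0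
    · exact Or.inl ⟨hu, hv, hb.1, hb.2⟩
    · exact Or.inr (Or.inr (Or.inr (Or.inl ⟨hu, hv, hb⟩)))
  · by_cases h0 : b₀ = 0
    · exact Or.inr (Or.inl (Or.inr (Or.inl ⟨hu, hv, h0⟩)))
    · exact Or.inr (Or.inr (Or.inr (Or.inr (Or.inr (Or.inl ⟨hu, hv, h0⟩)))))
  · by_cases h1 : b₁ = 0
    · exact Or.inr (Or.inl (Or.inl ⟨hu, hv, h1⟩))
    · exact Or.inr (Or.inr (Or.inr (Or.inr (Or.inl ⟨hu, hv, h1⟩))))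
  · by_cases huv : u = v
    · by_cases h01 : b₀ = b₁
      · exact Or.inr (Or.inl (Or.inr (Or.inr ⟨huv, hu, h01⟩)))
      · exact Or.inr (Or.inr (Or.inr (Or.inr (Or.inr (Or.inr ⟨huv, hu, h01⟩)))))
    · exact Or.inr (Or.inr (Or.inl ⟨hu, hv, huv⟩))

private lemma card_vec_ne {m : ℕ} :
    Fintype.card {u : Fin m → ZMod 2 // u ≠ 0} = 2 ^ m - 1 := by
  classical
  have := Fintype.card_subtype_compl (fun u : Fin m → ZMod 2 => u = 0)
  rw [Fintype.card_subtype_eq, card_domain] at this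
  exact (Fintype.card_congr (Equiv.subtypeEquivRight (fun u => Iff.rfl))).trans this

private lemma card_pair_ne3 :
    Fintype.card {q : ZMod 2 × ZMod 2 // ¬(q.1 = 0 ∧ q.2 = 0)} = 3 := by
  decide

private lemma card_vecs_distinct {m : ℕ} :
    Fintype.card {w : (Fin m → ZMod 2) × (Fin m → ZMod 2) // w.1 ≠ 0 ∧ w.2 ≠ 0 ∧ w.1 ≠ w.2}
      = (2 ^ m - 1) * (2 ^ m - 2) := by
  classical
  have e : {w : (Fin m → ZMod 2) × (Fin m → ZMod 2) // w.1 ≠ 0 ∧ w.2 ≠ 0 ∧ w.1 ≠ w.2}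
      ≃ Σ u : {u : Fin m → ZMod 2 // u ≠ 0}, {v : Fin m → ZMod 2 // v ≠ 0 ∧ v ≠ u.1} :=
    { toFun := fun w => ⟨⟨w.1.1, w.2.1⟩, ⟨w.1.2, w.2.2.1, fun hh => w.2.2.2 hh.symm⟩⟩
      invFun := fun s => ⟨(s.1.1, s.2.1), s.1.2, s.2.2.1, fun hh => s.2.2.2 hh.symm⟩
      left_inv := fun ⟨⟨u, v⟩, h⟩ => rfl
      right_inv := fun ⟨⟨u, hu⟩, ⟨v, hv⟩⟩ => rfl }
  rw [Fintype.card_congr e, Fintype.card_sigma]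
  have hinner : ∀ u : {u : Fin m → ZMod 2 // u ≠ 0},
      Fintype.card {v : Fin m → ZMod 2 // v ≠ 0 ∧ v ≠ u.1} = 2 ^ m - 2 := by
    rintro ⟨u, hu⟩
    have e2 : {v : Fin m → ZMod 2 // v ≠ 0 ∧ v ≠ u}
        ≃ {v : Fin m → ZMod 2 // ¬(v = 0 ∨ v = u)} :=
      Equiv.subtypeEquivRight (fun v => by tauto)
    rw [Fintype.card_congr e2, Fintype.card_subtype_compl, card_domain]
    have hd : Disjoint (fun v : Fin m → ZMod 2 => v = 0) (fun v => v = u) := by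
      rw [Pi.disjoint_iff]
      intro v
      rw [Prop.disjoint_iff]
      rintro ⟨rfl, h⟩
      exact hu h.symm
    rw [Fintype.card_subtype_or_disjoint _ _ hd, Fintype.card_subtype_eq,
      Fintype.card_subtype_eq]
  rw [Finset.sum_congr rfl (fun u _ => hinner u), Finset.sum_const, Finset.card_univ,
    card_vec_ne, smul_eq_mul]

private lemma card_Qh {m : ℕ} :
    Fintype.card {p : Param m // Qh p} = (2 ^ m - 1) * 2 * 3 := by
  classical
  have hd1 : Disjoint (fun p : Param m => p.1 ≠ 0 ∧ p.2.1 = 0 ∧ p.2.2.2 = 0)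
      (fun p => (p.1 = 0 ∧ p.2.1 ≠ 0 ∧ p.2.2.1 = 0) ∨
        (p.1 = p.2.1 ∧ p.1 ≠ 0 ∧ p.2.2.1 = p.2.2.2)) := by
    rw [Pi.disjoint_iff]; intro p; rw [Prop.disjoint_iff]
    rintro ⟨⟨h1, h2, h3⟩, h4 | h4⟩
    · exact h1 h4.1
    · exact h1 (h4.1.trans h2)
  have hd2 : Disjoint (fun p : Param m => p.1 = 0 ∧ p.2.1 ≠ 0 ∧ p.2.2.1 = 0)
      (fun p => p.1 = p.2.1 ∧ p.1 ≠ 0 ∧ p.2.2.1 = p.2.2.2) := by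
    rw [Pi.disjoint_iff]; intro p; rw [Prop.disjoint_iff]
    rintro ⟨⟨h1, h2, h3⟩, h4, h5, h6⟩
    exact h5 h1
  have e1 : {p : Param m // p.1 ≠ 0 ∧ p.2.1 = 0 ∧ p.2.2.2 = 0}
      ≃ {u : Fin m → ZMod 2 // u ≠ 0} × ZMod 2 :=
    { toFun := fun p => (⟨p.1.1, p.2.1⟩, p.1.2.2.1)
      invFun := fun q => ⟨(q.1.1, 0, q.2, 0), q.1.2, rfl, rfl⟩
      left_inv := by
        rintro ⟨⟨u, v, b₀, b₁⟩, h1, h2, h3⟩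
        simp only at h2 h3
        subst h2; subst h3; rfl
      right_inv := by rintro ⟨⟨u, hu⟩, b⟩; rfl }
  have e2 : {p : Param m // p.1 = 0 ∧ p.2.1 ≠ 0 ∧ p.2.2.1 = 0}
      ≃ {u : Fin m → ZMod 2 // u ≠ 0} × ZMod 2 :=
    { toFun := fun p => (⟨p.1.2.1, p.2.2.1⟩, p.1.2.2.2)
      invFun := fun q => ⟨(0, q.1.1, 0, q.2), rfl, q.1.2, rfl⟩
      left_inv := by
        rintro ⟨⟨u, v, b₀, b₁⟩, h1, h2, h3⟩
        simp only at h1 h3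
        subst h1; subst h3; rfl
      right_inv := by rintro ⟨⟨u, hu⟩, b⟩; rfl }
  have e3 : {p : Param m // p.1 = p.2.1 ∧ p.1 ≠ 0 ∧ p.2.2.1 = p.2.2.2}
      ≃ {u : Fin m → ZMod 2 // u ≠ 0} × ZMod 2 :=
    { toFun := fun p => (⟨p.1.1, p.2.2.1⟩, p.1.2.2.1)
      invFun := fun q => ⟨(q.1.1, q.1.1, q.2, q.2), rfl, q.1.2, rfl⟩
      left_inv := by
        rintro ⟨⟨u, v, b₀, b₁⟩, h1, h2, h3⟩
        simp only at h1 h3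
        subst h1; subst h3; rfl
      right_inv := by rintro ⟨⟨u, hu⟩, b⟩; rfl }
  have hQh : Fintype.card {p : Param m // Qh p}
      = Fintype.card {p : Param m // (p.1 ≠ 0 ∧ p.2.1 = 0 ∧ p.2.2.2 = 0) ∨
          ((p.1 = 0 ∧ p.2.1 ≠ 0 ∧ p.2.2.1 = 0) ∨
            (p.1 = p.2.1 ∧ p.1 ≠ 0 ∧ p.2.2.1 = p.2.2.2))} :=
    Fintype.card_congr (Equiv.subtypeEquivRight (fun p => by rw [Qh]))
  rw [hQh, Fintype.card_subtype_or_disjoint _ _ hd1,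
    Fintype.card_subtype_or_disjoint _ _ hd2,
    Fintype.card_congr e1, Fintype.card_congr e2, Fintype.card_congr e3,
    Fintype.card_prod]
  simp only [card_vec_ne, ZMod.card]
  ring

private lemma card_Qt {m : ℕ} :
    Fintype.card {p : Param m // Qt p} = (2 ^ m - 1) * (2 ^ m - 2) * 4 := by
  have e : {p : Param m // Qt p}
      ≃ {w : (Fin m → ZMod 2) × (Fin m → ZMod 2) // w.1 ≠ 0 ∧ w.2 ≠ 0 ∧ w.1 ≠ w.2}
        × (ZMod 2 × ZMod 2) :=
    { toFun := fun p => (⟨(p.1.1, p.1.2.1), p.2⟩, p.1.2.2)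
      invFun := fun q => ⟨(q.1.1.1, q.1.1.2, q.2.1, q.2.2), q.1.2⟩
      left_inv := by rintro ⟨⟨u, v, b₀, b₁⟩, h⟩; rfl
      right_inv := by rintro ⟨⟨⟨u, v⟩, h⟩, b₀, b₁⟩; rfl }
  rw [Fintype.card_congr e, Fintype.card_prod, card_vecs_distinct]
  simp [ZMod.card]

private lemma card_Qf {m : ℕ} :
    Fintype.card {p : Param m // Qf p} = 3 + (2 ^ m - 1) * 2 * 3 := by
  classical
  have hd1 : Disjoint (fun p : Param m => p.1 = 0 ∧ p.2.1 = 0 ∧ ¬(p.2.2.1 = 0 ∧ p.2.2.2 = 0))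
      (fun p => (p.1 ≠ 0 ∧ p.2.1 = 0 ∧ p.2.2.2 ≠ 0) ∨ ((p.1 = 0 ∧ p.2.1 ≠ 0 ∧ p.2.2.1 ≠ 0) ∨
        (p.1 = p.2.1 ∧ p.1 ≠ 0 ∧ p.2.2.1 ≠ p.2.2.2))) := by
    rw [Pi.disjoint_iff]; intro p; rw [Prop.disjoint_iff]
    rintro ⟨⟨h1, h2, h3⟩, h4 | h4 | h4⟩
    · exact h4.1 h1
    · exact h4.2.1 h2
    · exact h4.2.1 h1
  have hd2 : Disjoint (fun p : Param m => p.1 ≠ 0 ∧ p.2.1 = 0 ∧ p.2.2.2 ≠ 0)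
      (fun p => (p.1 = 0 ∧ p.2.1 ≠ 0 ∧ p.2.2.1 ≠ 0) ∨
        (p.1 = p.2.1 ∧ p.1 ≠ 0 ∧ p.2.2.1 ≠ p.2.2.2)) := by
    rw [Pi.disjoint_iff]; intro p; rw [Prop.disjoint_iff]
    rintro ⟨⟨h1, h2, h3⟩, h4 | h4⟩
    · exact h1 h4.1
    · exact h1 (h4.1.trans h2)
  have hd3 : Disjoint (fun p : Param m => p.1 = 0 ∧ p.2.1 ≠ 0 ∧ p.2.2.1 ≠ 0)
      (fun p => p.1 = p.2.1 ∧ p.1 ≠ 0 ∧ p.2.2.1 ≠ p.2.2.2) := by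
    rw [Pi.disjoint_iff]; intro p; rw [Prop.disjoint_iff]
    rintro ⟨⟨h1, h2, h3⟩, h4, h5, h6⟩
    exact h5 h1
  have e0 : {p : Param m // p.1 = 0 ∧ p.2.1 = 0 ∧ ¬(p.2.2.1 = 0 ∧ p.2.2.2 = 0)}
      ≃ {q : ZMod 2 × ZMod 2 // ¬(q.1 = 0 ∧ q.2 = 0)} :=
    { toFun := fun p => ⟨p.1.2.2, p.2.2.2⟩
      invFun := fun q => ⟨(0, 0, q.1.1, q.1.2), rfl, rfl, q.2⟩
      left_inv := by
        rintro ⟨⟨u, v, b₀, b₁⟩, h1, h2, h3⟩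
        simp only at h1 h2
        subst h1; subst h2; rfl
      right_inv := by rintro ⟨⟨b₀, b₁⟩, h⟩; rfl }
  have e1 : {p : Param m // p.1 ≠ 0 ∧ p.2.1 = 0 ∧ p.2.2.2 ≠ 0}
      ≃ {u : Fin m → ZMod 2 // u ≠ 0} × ZMod 2 :=
    { toFun := fun p => (⟨p.1.1, p.2.1⟩, p.1.2.2.1)
      invFun := fun q => ⟨(q.1.1, 0, q.2, 1), q.1.2, rfl, one_ne_zero⟩
      left_inv := by
        rintro ⟨⟨u, v, b₀, b₁⟩, h1, h2, h3⟩
        simp only at h2 h3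
        subst h2
        have : b₁ = 1 := zmod2_eq_one h3
        subst this; rfl
      right_inv := by rintro ⟨⟨u, hu⟩, b⟩; rfl }
  have e2 : {p : Param m // p.1 = 0 ∧ p.2.1 ≠ 0 ∧ p.2.2.1 ≠ 0}
      ≃ {u : Fin m → ZMod 2 // u ≠ 0} × ZMod 2 :=
    { toFun := fun p => (⟨p.1.2.1, p.2.2.1⟩, p.1.2.2.2)
      invFun := fun q => ⟨(0, q.1.1, 1, q.2), rfl, q.1.2, one_ne_zero⟩
      left_inv := by
        rintro ⟨⟨u, v, b₀, b₁⟩, h1, h2, h3⟩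
        simp only at h1 h3
        subst h1
        have : b₀ = 1 := zmod2_eq_one h3
        subst this; rfl
      right_inv := by rintro ⟨⟨u, hu⟩, b⟩; rfl }
  have e3 : {p : Param m // p.1 = p.2.1 ∧ p.1 ≠ 0 ∧ p.2.2.1 ≠ p.2.2.2}
      ≃ {u : Fin m → ZMod 2 // u ≠ 0} × ZMod 2 :=
    { toFun := fun p => (⟨p.1.1, p.2.2.1⟩, p.1.2.2.1)
      invFun := fun q => ⟨(q.1.1, q.1.1, q.2, q.2 + 1), rfl, q.1.2, zmod2_self_ne_succ _⟩
      left_inv := by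
        rintro ⟨⟨u, v, b₀, b₁⟩, h1, h2, h3⟩
        simp only at h1 h3
        subst h1
        have : b₁ = b₀ + 1 := zmod2_succ_of_ne h3
        subst this; rfl
      right_inv := by rintro ⟨⟨u, hu⟩, b⟩; rfl }
  have hQf : Fintype.card {p : Param m // Qf p}
      = Fintype.card {p : Param m // (p.1 = 0 ∧ p.2.1 = 0 ∧ ¬(p.2.2.1 = 0 ∧ p.2.2.2 = 0)) ∨
          ((p.1 ≠ 0 ∧ p.2.1 = 0 ∧ p.2.2.2 ≠ 0) ∨ ((p.1 = 0 ∧ p.2.1 ≠ 0 ∧ p.2.2.1 ≠ 0) ∨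
            (p.1 = p.2.1 ∧ p.1 ≠ 0 ∧ p.2.2.1 ≠ p.2.2.2)))} :=
    Fintype.card_congr (Equiv.subtypeEquivRight (fun p => by rw [Qf]))
  rw [hQf, Fintype.card_subtype_or_disjoint _ _ hd1,
    Fintype.card_subtype_or_disjoint _ _ hd2,
    Fintype.card_subtype_or_disjoint _ _ hd3,
    Fintype.card_congr e0, Fintype.card_congr e1, Fintype.card_congr e2, Fintype.card_congr e3,
    card_pair_ne3, Fintype.card_prod]
  simp only [card_vec_ne, ZMod.card]
  ring

section W2
variable {E : Type*} [Field E] [Algebra (ZMod 2) E] {m : ℕ} {ω : E}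

private lemma wt_Q0 (hω0 : ω ≠ 0) (hω1 : ω ≠ 1) : wt (cw ω (0 : Param m)) = 0 := by
  have h : cw ω (0 : Param m) = fun _ => (0 : E) := by
    funext x
    simp [cw, psi, Lf_zero]
  rw [h, wt]
  simp

private lemma wt_Qh (hm : 1 ≤ m) (hω0 : ω ≠ 0) (hω1 : ω ≠ 1) {p : Param m} (h : Qh p) :
    wt (cw ω p) = 2 ^ (m - 1) := by
  have hpow : 2 ^ m = 2 ^ (m - 1) * 2 := by rw [← pow_succ, Nat.sub_add_cancel hm]
  rw [wt_cw hω0 hω1]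
  rcases h with ⟨h1, h2, h3⟩ | ⟨h1, h2, h3⟩ | ⟨h1, h2, h3⟩
  · rw [h2, N_u0 h1, if_pos h3]; omega
  · rw [h1, N_0v h2, if_pos h3]; omega
  · rw [← h1, N_uu h2, if_pos h3]; omega

private lemma wt_Qt (hm : 2 ≤ m) (hω0 : ω ≠ 0) (hω1 : ω ≠ 1) {p : Param m} (h : Qt p) :
    wt (cw ω p) = 3 * 2 ^ (m - 2) := by
  have hpow : 2 ^ m = 2 ^ (m - 2) * 4 := by
    rw [show (4:ℕ) = 2 ^ 2 from rfl, ← pow_add]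
    congr 1; omega
  rw [wt_cw hω0 hω1, card_pair h.1 h.2.1 h.2.2]
  omega

private lemma wt_Qf (hω0 : ω ≠ 0) (hω1 : ω ≠ 1) {p : Param m} (h : Qf p) :
    wt (cw ω p) = 2 ^ m := by
  rw [wt_cw hω0 hω1]
  rcases h with ⟨h1, h2, h3⟩ | ⟨h1, h2, h3⟩ | ⟨h1, h2, h3⟩ | ⟨h1, h2, h3⟩
  · rw [h1, h2, N_00, if_neg h3, Nat.sub_zero]
  · rw [h2, N_u0 h1, if_neg h3, Nat.sub_zero]
  · rw [h1, N_0v h2, if_neg h3, Nat.sub_zero]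
  · rw [← h1, N_uu h2, if_neg h3, Nat.sub_zero]

private lemma cw_inj (hω0 : ω ≠ 0) (hω1 : ω ≠ 1) :
    Function.Injective (cw ω : Param m → (Fin m → ZMod 2) → E) := by
  intro p q h
  have hpt : ∀ x, Lf p.1 x + p.2.2.1 = Lf q.1 x + q.2.2.1 ∧
      Lf p.2.1 x + p.2.2.2 = Lf q.2.1 x + q.2.2.2 := by
    intro x
    have := psi_inj hω0 hω1 (a₁ := (Lf p.1 x + p.2.2.1, Lf p.2.1 x + p.2.2.2))
      (a₂ := (Lf q.1 x + q.2.2.1, Lf q.2.1 x + q.2.2.2)) (congrFun h x)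
    exact ⟨congrArg Prod.fst this, congrArg Prod.snd this⟩
  have hb := hpt 0
  rw [map_zero, map_zero, map_zero, map_zero, zero_add, zero_add, zero_add, zero_add] at hb
  obtain ⟨hb1, hb2⟩ := hb
  have hu : p.1 = q.1 := by
    funext i
    have := (hpt (Pi.single i 1)).1
    rw [Lf_single, Lf_single, hb1] at this
    exact add_right_cancel this
  have hv : p.2.1 = q.2.1 := by
    funext i
    have := (hpt (Pi.single i 1)).2
    rw [Lf_single, Lf_single, hb2] at this
    exact add_right_cancel this
  obtain ⟨u, v, b₀, b₁⟩ := p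
  obtain ⟨u', v', b₀', b₁'⟩ := q
  simp only at hu hv hb1 hb2
  subst hu; subst hv; subst hb1; subst hb2
  rfl

private lemma numWt_eq_card [Fintype E] (hE : Fintype.card E = 2 ^ 2) (hω0 : ω ≠ 0)
    (hω1 : ω ≠ 1) (i : ℕ) :
    numWt (liftCode (ZMod 2) E (RM 1 m)) i
      = Fintype.card {p : Param m // wt (cw ω p) = i} := by
  classical
  have hset : {c : (Fin m → ZMod 2) → E | c ∈ liftCode (ZMod 2) E (RM 1 m) ∧ wt c = i}
      = cw ω '' {p : Param m | wt (cw ω p) = i} := by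
    ext c
    simp only [Set.mem_setOf_eq, Set.mem_image]
    constructor
    · rintro ⟨hc, hw⟩
      obtain ⟨p, rfl⟩ := (mem_lift_iff_cw hE hω0 hω1 c).mp hc
      exact ⟨p, hw, rfl⟩
    · rintro ⟨p, hw, rfl⟩
      exact ⟨(mem_lift_iff_cw hE hω0 hω1 _).mpr ⟨p, rfl⟩, hw⟩
  rw [numWt, hset, Set.ncard_image_of_injective _ (cw_inj hω0 hω1),
    ← Nat.card_coe_set_eq, Nat.card_eq_fintype_card]
  exact Fintype.card_congr (Equiv.subtypeEquivRight (fun p => Iff.rfl))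

end W2


/-- for `m ≥ 3` the lifted code `RM₂(1,m)(2|2²)` has weight enumerator
`1 + 3(2^{m+1}-2) z^{2^{m-1}} + 4(2^m-1)(2^m-2) z^{3·2^{m-2}} + 3(2^{m+1}-1) z^{2^m}`. -/
theorem stmt18 {E : Type*} [Field E] [Algebra (ZMod 2) E] [Fintype E]
    {m : ℕ} (hm : 3 ≤ m) (hE : Fintype.card E = 2 ^ 2) :
    numWt (liftCode (ZMod 2) E (RM 1 m)) 0 = 1 ∧
    numWt (liftCode (ZMod 2) E (RM 1 m)) (2 ^ (m - 1)) = 3 * (2 ^ (m + 1) - 2) ∧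
    numWt (liftCode (ZMod 2) E (RM 1 m)) (3 * 2 ^ (m - 2)) = 4 * (2 ^ m - 1) * (2 ^ m - 2) ∧
    numWt (liftCode (ZMod 2) E (RM 1 m)) (2 ^ m) = 3 * (2 ^ (m + 1) - 1) ∧
    ∀ i, i ≠ 0 → i ≠ 2 ^ (m - 1) → i ≠ 3 * 2 ^ (m - 2) → i ≠ 2 ^ m →
      numWt (liftCode (ZMod 2) E (RM 1 m)) i = 0 := by
  classical
  obtain ⟨ω, hω0, hω1⟩ := exists_omega hE
  have hm1 : 1 ≤ m := by omega
  have hm2 : 2 ≤ m := by omega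
  have hK : 2 ≤ 2 ^ (m - 2) := by
    calc 2 = 2 ^ 1 := rfl
    _ ≤ 2 ^ (m - 2) := Nat.pow_le_pow_right (by norm_num) (by omega)
  have e1 : 2 ^ (m - 1) = 2 * 2 ^ (m - 2) := by
    rw [← pow_succ']
    congr 1; omega
  have e2 : 2 ^ m = 2 * 2 ^ (m - 1) := by
    rw [← pow_succ']
    congr 1; omega
  have e3 : 2 ^ (m + 1) = 2 * 2 ^ m := by rw [← pow_succ']
  refine ⟨?_, ?_, ?_, ?_, ?_⟩
  · rw [numWt_eq_card hE hω0 hω1]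
    have hiff : ∀ p : Param m, wt (cw ω p) = 0 ↔ p = 0 := by
      intro p
      constructor
      · intro hw
        rcases Q_exhaustive p with h | h | h | h
        · exact h
        · rw [wt_Qh hm1 hω0 hω1 h] at hw; omega
        · rw [wt_Qt hm2 hω0 hω1 h] at hw; omega
        · rw [wt_Qf hω0 hω1 h] at hw; omega
      · rintro rfl; exact wt_Q0 hω0 hω1
    rw [Fintype.card_congr (Equiv.subtypeEquivRight hiff), Fintype.card_subtype_eq]
  · rw [numWt_eq_card hE hω0 hω1]
    have hiff : ∀ p : Param m, wt (cw ω p) = 2 ^ (m - 1) ↔ Qh p := by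
      intro p
      constructor
      · intro hw
        rcases Q_exhaustive p with h | h | h | h
        · rw [h, wt_Q0 hω0 hω1] at hw; omega
        · exact h
        · rw [wt_Qt hm2 hω0 hω1 h] at hw; omega
        · rw [wt_Qf hω0 hω1 h] at hw; omega
      · exact wt_Qh hm1 hω0 hω1
    rw [Fintype.card_congr (Equiv.subtypeEquivRight hiff), card_Qh]
    have : 1 ≤ 2 ^ m := Nat.one_le_two_pow
    omega
  · rw [numWt_eq_card hE hω0 hω1]
    have hiff : ∀ p : Param m, wt (cw ω p) = 3 * 2 ^ (m - 2) ↔ Qt p := by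
      intro p
      constructor
      · intro hw
        rcases Q_exhaustive p with h | h | h | h
        · rw [h, wt_Q0 hω0 hω1] at hw; omega
        · rw [wt_Qh hm1 hω0 hω1 h] at hw; omega
        · exact h
        · rw [wt_Qf hω0 hω1 h] at hw; omega
      · exact wt_Qt hm2 hω0 hω1
    rw [Fintype.card_congr (Equiv.subtypeEquivRight hiff), card_Qt]
    ring
  · rw [numWt_eq_card hE hω0 hω1]
    have hiff : ∀ p : Param m, wt (cw ω p) = 2 ^ m ↔ Qf p := by
      intro p
      constructor
      · intro hw
        rcases Q_exhaustive p with h | h | h | h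
        · rw [h, wt_Q0 hω0 hω1] at hw; omega
        · rw [wt_Qh hm1 hω0 hω1 h] at hw; omega
        · rw [wt_Qt hm2 hω0 hω1 h] at hw; omega
        · exact h
      · exact wt_Qf hω0 hω1
    rw [Fintype.card_congr (Equiv.subtypeEquivRight hiff), card_Qf]
    have : 1 ≤ 2 ^ m := Nat.one_le_two_pow
    omega
  · intro i hi0 hih hit hif
    rw [numWt_eq_card hE hω0 hω1, Fintype.card_eq_zero_iff]
    refine ⟨fun ⟨p, hp⟩ => ?_⟩
    rcases Q_exhaustive p with h | h | h | h
    · rw [h, wt_Q0 hω0 hω1] at hp; exact hi0 hp.symm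
    · rw [wt_Qh hm1 hω0 hω1 h] at hp; exact hih hp.symm
    · rw [wt_Qt hm2 hω0 hω1 h] at hp; exact hit hp.symm
    · rw [wt_Qf hω0 hω1 h] at hp; exact hif hp.symm
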